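/- Suppose the utility function f is adaptive monotone and adaptive submodular with respect to the prior P(w) over world maps. Then the adaptive greedy policy π_GR, which at each step visits the node with highest expected marginal gain under the posterior P(w|ψ), satisfies E_{w~P(w)}[f(π_GR, w)] ≥ (1 - 1/e)·E_{w~P(w)}[f(π*, w)] for every policy π* selecting the same number of nodes. -/

import Mathlib

open Finset

section AdaptiveSubmodular

variable {W V O : Type*} [Fintype W] [Fintype V] [DecidableEq V] [DecidableEq O]

/-- A deterministic adaptive policy maps the history of (node, observation) pairs to
the next node to visit. -/
def AdaptivePolicy (V O : Type*) : Type _ := List (V × O) → V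

/-- The history obtained after running policy `π` for `n` steps in world `w`, where
visiting node `v` in world `w` yields observation `obs v w`. -/
def runHist (obs : V → W → O) (π : AdaptivePolicy V O) (w : W) : ℕ → List (V × O)
  | 0 => []
  | (n + 1) =>
      let h := runHist obs π w n
      h ++ [(π h, obs (π h) w)]

/-- The set of nodes visited along a history. -/
def histNodes (h : List (V × O)) : Finset V := (h.map Prod.fst).toFinset

/-- A world is consistent with a history if it would have produced the recorded
observations. -/
def consistent (obs : V → W → O) (h : List (V × O)) (w : W) : Prop :=
  ∀ pr ∈ h, obs pr.1 w = pr.2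

instance (obs : V → W → O) (h : List (V × O)) (w : W) :
    Decidable (consistent obs h w) := by unfold consistent; infer_instance

/-- Unnormalized posterior mass of the worlds consistent with a history. -/
noncomputable def histMass (obs : V → W → O) (p : W → ℝ) (h : List (V × O)) : ℝ :=
  ∑ w, if consistent obs h w then p w else 0

/-- Unnormalized expected marginal gain `E_{w ~ P(w|ψ)}[Δ(v | V_ψ, w)] · P(ψ)` of
visiting `v` after history `h`. -/
noncomputable def condGain (obs : V → W → O) (p : W → ℝ) (f : Finset V → W → ℝ)
    (h : List (V × O)) (v : V) : ℝ :=
  ∑ w, (if consistent obs h w then p w else 0) *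
    (f (insert v (histNodes h)) w - f (histNodes h) w)

set_option linter.unusedSectionVars false

lemma runHist_succ (obs : V → W → O) (π : AdaptivePolicy V O) (w : W) (n : ℕ) :
    runHist obs π w (n+1) = runHist obs π w n ++
      [(π (runHist obs π w n), obs (π (runHist obs π w n)) w)] := rfl

lemma runHist_length (obs : V → W → O) (π : AdaptivePolicy V O) (w : W) (n : ℕ) :
    (runHist obs π w n).length = n := by
  induction n with
  | zero => rfl
  | succ n ih => rw [runHist_succ, List.length_append, ih]; simp

lemma consistent_append {obs : V → W → O} {a b : List (V × O)} {w : W} :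
    consistent obs (a ++ b) w ↔ consistent obs a w ∧ consistent obs b w := by
  unfold consistent
  simp only [List.mem_append]
  constructor
  · intro h; exact ⟨fun pr hpr => h pr (Or.inl hpr), fun pr hpr => h pr (Or.inr hpr)⟩
  · rintro ⟨h1, h2⟩ pr (hpr | hpr); exacts [h1 pr hpr, h2 pr hpr]

lemma consistent_self (obs : V → W → O) (π : AdaptivePolicy V O) (w : W) (n : ℕ) :
    consistent obs (runHist obs π w n) w := by
  induction n with
  | zero => intro pr hpr; simp [runHist] at hpr
  | succ n ih =>
      rw [runHist_succ, consistent_append]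
      refine ⟨ih, ?_⟩
      intro pr hpr
      simp at hpr
      subst hpr
      rfl

lemma runHist_eq_of_consistent {obs : V → W → O} {π : AdaptivePolicy V O} {w0 w : W} {n : ℕ}
    (h : consistent obs (runHist obs π w0 n) w) :
    runHist obs π w n = runHist obs π w0 n := by
  induction n with
  | zero => rfl
  | succ n ih =>
      rw [runHist_succ obs π w0] at h
      rw [runHist_succ obs π w, runHist_succ obs π w0]
      rcases consistent_append.mp h with ⟨h1, h2⟩
      have hobs : obs (π (runHist obs π w0 n)) w = obs (π (runHist obs π w0 n)) w0 :=
        h2 (π (runHist obs π w0 n), obs (π (runHist obs π w0 n)) w0) (by simp)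
      rw [ih h1, hobs]

lemma histNodes_append (a b : List (V × O)) :
    histNodes (a ++ b) = histNodes a ∪ histNodes b := by
  simp [histNodes]

lemma histNodes_concat (l : List (V × O)) (v : V) (o : O) :
    histNodes (l ++ [(v, o)]) = insert v (histNodes l) := by
  rw [histNodes_append]
  rw [Finset.union_comm]
  simp [histNodes]

lemma histMass_nonneg (obs : V → W → O) {p : W → ℝ} (hp0 : ∀ w, 0 ≤ p w)
    (h : List (V × O)) : 0 ≤ histMass obs p h := by
  apply Finset.sum_nonneg
  intro w _
  split <;> [exact hp0 w; rfl]

lemma le_histMass (obs : V → W → O) {p : W → ℝ} (hp0 : ∀ w, 0 ≤ p w)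
    {h : List (V × O)} {w : W} (hw : consistent obs h w) :
    p w ≤ histMass obs p h := by
  have h0 : ∀ w' ∈ (Finset.univ : Finset W),
      0 ≤ if consistent obs h w' then p w' else 0 := by
    intro w' _
    by_cases hc : consistent obs h w' <;> simp [hc, hp0 w']
  have := Finset.single_le_sum (f := fun w' => if consistent obs h w' then p w' else 0)
    h0 (Finset.mem_univ w)
  simp only [if_pos hw] at this
  exact this

lemma histMass_append_le (obs : V → W → O) {p : W → ℝ} (hp0 : ∀ w, 0 ≤ p w)
    (a b : List (V × O)) : histMass obs p (a ++ b) ≤ histMass obs p a := by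
  apply Finset.sum_le_sum
  intro w _
  by_cases hc : consistent obs (a ++ b) w
  · rw [if_pos hc, if_pos (consistent_append.mp hc).1]
  · rw [if_neg hc]; split <;> [exact hp0 w; rfl]


lemma histMass_zero_imp (obs : V → W → O) {p : W → ℝ} (hp0 : ∀ w, 0 ≤ p w)
    {h : List (V × O)} {w : W} (hw : consistent obs h w)
    (h0 : histMass obs p h = 0) : p w = 0 :=
  le_antisymm (h0 ▸ le_histMass obs hp0 hw) (hp0 w)

lemma gain_step (obs : V → W → O) (p : W → ℝ) (f : Finset V → W → ℝ)
    (hp0 : ∀ w, 0 ≤ p w)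
    (κ : W → List (V × O)) (ν : List (V × O) → V)
    (hκc : ∀ w, consistent obs (κ w) w)
    (hκd : ∀ w w', consistent obs (κ w) w' → κ w' = κ w) :
    ∑ w, p w * (f (insert (ν (κ w)) (histNodes (κ w))) w - f (histNodes (κ w)) w)
      = ∑ w, p w / histMass obs p (κ w) * condGain obs p f (κ w) (ν (κ w)) := by
  classical
  have key : ∀ w w' : W,
      p w / histMass obs p (κ w) *
        ((if consistent obs (κ w) w' then p w' else 0) *
          (f (insert (ν (κ w)) (histNodes (κ w))) w' - f (histNodes (κ w)) w'))
      = (if consistent obs (κ w') w then p w else 0) / histMass obs p (κ w') *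
          (p w' * (f (insert (ν (κ w')) (histNodes (κ w'))) w' - f (histNodes (κ w')) w')) := by
    intro w w'
    by_cases hc : consistent obs (κ w) w'
    · have he : κ w' = κ w := hκd w w' hc
      have hc' : consistent obs (κ w') w := by rw [he]; exact hκc w
      rw [if_pos hc, if_pos hc', he]
    · have hc' : ¬ consistent obs (κ w') w := by
        intro hcc
        exact hc (by rw [hκd w' w hcc]; exact hκc w')
      rw [if_neg hc, if_neg hc']
      ring
  calc
    ∑ w, p w * (f (insert (ν (κ w)) (histNodes (κ w))) w - f (histNodes (κ w)) w)
        = ∑ w', histMass obs p (κ w') / histMass obs p (κ w') *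
            (p w' * (f (insert (ν (κ w'))
              (histNodes (κ w'))) w' - f (histNodes (κ w')) w')) := by
          apply Finset.sum_congr rfl
          intro w' _
          rcases eq_or_ne (histMass obs p (κ w')) 0 with h0 | h0
          · rw [histMass_zero_imp obs hp0 (hκc w') h0]
            simp
          · rw [div_self h0, one_mul]
    _ = ∑ w', ∑ w, (if consistent obs (κ w') w then p w else 0) / histMass obs p (κ w') *
            (p w' * (f (insert (ν (κ w'))
              (histNodes (κ w'))) w' - f (histNodes (κ w')) w')) := by
          apply Finset.sum_congr rfl
          intro w' _
          have hMdef : histMass obs p (κ w')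
              = ∑ w, if consistent obs (κ w') w then p w else 0 := rfl
          nth_rewrite 1 [hMdef]
          rw [Finset.sum_div, Finset.sum_mul]
    _ = ∑ w, ∑ w', (if consistent obs (κ w') w then p w else 0) / histMass obs p (κ w') *
            (p w' * (f (insert (ν (κ w'))
              (histNodes (κ w'))) w' - f (histNodes (κ w')) w')) := Finset.sum_comm
    _ = ∑ w, p w / histMass obs p (κ w) * condGain obs p f (κ w) (ν (κ w)) := by
          apply Finset.sum_congr rfl
          intro w _
          rw [condGain, Finset.mul_sum]
          exact Finset.sum_congr rfl fun w' _ => (key w w').symm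



/-- Golovin–Krause: if the utility `f` is adaptive monotone and adaptive submodular
with respect to the prior `p` over world maps, then the adaptive greedy policy
`πGR` — which at each step visits the node with highest expected marginal gain
under the posterior — is `(1 - 1/e)`-optimal among all policies selecting the same
number `T` of nodes. -/
theorem adaptive_greedy_near_optimal
    (obs : V → W → O) (p : W → ℝ) (f : Finset V → W → ℝ) (T : ℕ)
    (hp0 : ∀ w, 0 ≤ p w) (hp1 : ∑ w, p w = 1)
    (hf0 : ∀ (S : Finset V) (w : W), 0 ≤ f S w)
    (hmono : ∀ (h : List (V × O)) (v : V), 0 ≤ condGain obs p f h v)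
    (hsub : ∀ (h h' : List (V × O)), h <+: h' → ∀ v : V,
      condGain obs p f h' v / histMass obs p h' ≤
        condGain obs p f h v / histMass obs p h)
    (πGR : AdaptivePolicy V O)
    (hgreedy : ∀ (w0 : W) (k : ℕ), k < T → ∀ v : V,
      condGain obs p f (runHist obs πGR w0 k) v ≤
        condGain obs p f (runHist obs πGR w0 k) (πGR (runHist obs πGR w0 k))) :
    ∀ πstar : AdaptivePolicy V O,
      (1 - 1 / Real.exp 1) * ∑ w, p w * f (histNodes (runHist obs πstar w T)) w ≤
        ∑ w, p w * f (histNodes (runHist obs πGR w T)) w := by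
  intro πstar
  classical
  have hExp : (0:ℝ) < Real.exp 1 := Real.exp_pos 1
  have hcoef : 1 - 1 / Real.exp 1 ≤ 1 := by
    have : 0 ≤ 1 / Real.exp 1 := by positivity
    linarith
  rcases Nat.eq_zero_or_pos T with hT0 | hT
  · subst hT0
    have hS : 0 ≤ ∑ w, p w * f (histNodes (runHist obs πGR w 0)) w :=
      Finset.sum_nonneg fun w _ => mul_nonneg (hp0 w) (hf0 _ w)
    have heq : ∑ w, p w * f (histNodes (runHist obs πstar w 0)) w
        = ∑ w, p w * f (histNodes (runHist obs πGR w 0)) w := rfl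
    rw [heq]
    calc (1 - 1 / Real.exp 1) * ∑ w, p w * f (histNodes (runHist obs πGR w 0)) w
        ≤ 1 * ∑ w, p w * f (histNodes (runHist obs πGR w 0)) w :=
          mul_le_mul_of_nonneg_right hcoef hS
      _ = _ := one_mul _
  -- main case
  set g : ℕ → ℝ := fun n => ∑ w, p w * f (histNodes (runHist obs πGR w n)) w with hgdef
  set OPT : ℝ := ∑ w, p w * f (histNodes (runHist obs πstar w T)) w with hOPTdef
  show (1 - 1 / Real.exp 1) * OPT ≤ g T
  -- greedy increment
  have greedy_inc : ∀ n, g (n+1) - g n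
      = ∑ w, p w / histMass obs p (runHist obs πGR w n) *
          condGain obs p f (runHist obs πGR w n) (πGR (runHist obs πGR w n)) := by
    intro n
    have e1 : g (n+1) - g n = ∑ w, p w *
        (f (insert (πGR (runHist obs πGR w n)) (histNodes (runHist obs πGR w n))) w
          - f (histNodes (runHist obs πGR w n)) w) := by
      show (∑ w, p w * f (histNodes (runHist obs πGR w (n+1))) w)
          - (∑ w, p w * f (histNodes (runHist obs πGR w n)) w) = _
      rw [← Finset.sum_sub_distrib]
      apply Finset.sum_congr rfl
      intro w _
      rw [runHist_succ, histNodes_concat]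
      ring
    rw [e1]
    exact gain_step obs p f hp0 (fun w => runHist obs πGR w n) πGR
      (fun w => consistent_self obs πGR w n)
      (fun w w' hc => runHist_eq_of_consistent hc)
  -- monotone chain: OPT ≤ E[f(πstar run ∪ greedy run up to j)]
  have mono_chain : ∀ j, OPT ≤
      ∑ w, p w * f (histNodes (runHist obs πstar w T ++ runHist obs πGR w j)) w := by
    intro j
    induction j with
    | zero =>
        rw [hOPTdef]
        apply le_of_eq
        apply Finset.sum_congr rfl
        intro w _
        rw [show runHist obs πGR w 0 = [] from rfl, List.append_nil]
    | succ j ih =>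
        refine ih.trans ?_
        have hκc : ∀ w, consistent obs (runHist obs πstar w T ++ runHist obs πGR w j) w :=
          fun w => consistent_append.mpr ⟨consistent_self _ _ _ _, consistent_self _ _ _ _⟩
        have hκd : ∀ w w', consistent obs (runHist obs πstar w T ++ runHist obs πGR w j) w' →
            runHist obs πstar w' T ++ runHist obs πGR w' j
              = runHist obs πstar w T ++ runHist obs πGR w j := by
          intro w w' hc
          rcases consistent_append.mp hc with ⟨h1, h2⟩
          rw [runHist_eq_of_consistent h1, runHist_eq_of_consistent h2]
        have hdrop : ∀ w : W, (runHist obs πstar w T ++ runHist obs πGR w j).drop T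
            = runHist obs πGR w j := fun w => List.drop_left' (runHist_length obs πstar w T)
        have hgs := gain_step obs p f hp0
          (fun w => runHist obs πstar w T ++ runHist obs πGR w j)
          (fun l => πGR (l.drop T)) hκc hκd
        have hnn : 0 ≤ ∑ w, p w * (f (insert (πGR ((runHist obs πstar w T ++
              runHist obs πGR w j).drop T))
              (histNodes (runHist obs πstar w T ++ runHist obs πGR w j))) w
            - f (histNodes (runHist obs πstar w T ++ runHist obs πGR w j)) w) := by
          rw [hgs]
          apply Finset.sum_nonneg
          intro w _
          exact mul_nonneg (div_nonneg (hp0 w) (histMass_nonneg obs hp0 _)) (hmono _ _)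
        have e2 : ∑ w, p w * f (histNodes (runHist obs πstar w T ++
              runHist obs πGR w (j+1))) w
            - ∑ w, p w * f (histNodes (runHist obs πstar w T ++ runHist obs πGR w j)) w
            = ∑ w, p w * (f (insert (πGR ((runHist obs πstar w T ++
                runHist obs πGR w j).drop T))
                (histNodes (runHist obs πstar w T ++ runHist obs πGR w j))) w
              - f (histNodes (runHist obs πstar w T ++ runHist obs πGR w j)) w) := by
          rw [← Finset.sum_sub_distrib]
          apply Finset.sum_congr rfl
          intro w _
          rw [runHist_succ, ← List.append_assoc, histNodes_concat, hdrop w]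
          ring
        linarith [e2 ▸ hnn]
  -- per-step bound with submodularity
  have step_bound : ∀ t, t < T → ∀ k,
      ∑ w, p w * f (histNodes (runHist obs πGR w t ++ runHist obs πstar w (k+1))) w
        ≤ ∑ w, p w * f (histNodes (runHist obs πGR w t ++ runHist obs πstar w k)) w
          + (g (t+1) - g t) := by
    intro t ht k
    have hκc : ∀ w, consistent obs (runHist obs πGR w t ++ runHist obs πstar w k) w :=
      fun w => consistent_append.mpr ⟨consistent_self _ _ _ _, consistent_self _ _ _ _⟩
    have hκd : ∀ w w', consistent obs (runHist obs πGR w t ++ runHist obs πstar w k) w' →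
        runHist obs πGR w' t ++ runHist obs πstar w' k
          = runHist obs πGR w t ++ runHist obs πstar w k := by
      intro w w' hc
      rcases consistent_append.mp hc with ⟨h1, h2⟩
      rw [runHist_eq_of_consistent h1, runHist_eq_of_consistent h2]
    have hdrop : ∀ w : W, (runHist obs πGR w t ++ runHist obs πstar w k).drop t
        = runHist obs πstar w k := fun w => List.drop_left' (runHist_length obs πGR w t)
    have hgs := gain_step obs p f hp0
      (fun w => runHist obs πGR w t ++ runHist obs πstar w k)
      (fun l => πstar (l.drop t)) hκc hκd
    have e2 : ∑ w, p w * f (histNodes (runHist obs πGR w t ++ runHist obs πstar w (k+1))) w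
        - ∑ w, p w * f (histNodes (runHist obs πGR w t ++ runHist obs πstar w k)) w
        = ∑ w, p w * (f (insert (πstar ((runHist obs πGR w t ++
            runHist obs πstar w k).drop t))
            (histNodes (runHist obs πGR w t ++ runHist obs πstar w k))) w
          - f (histNodes (runHist obs πGR w t ++ runHist obs πstar w k)) w) := by
      rw [← Finset.sum_sub_distrib]
      apply Finset.sum_congr rfl
      intro w _
      rw [runHist_succ, ← List.append_assoc, histNodes_concat, hdrop w]
      ring
    have term_bound : ∀ w : W,
        p w / histMass obs p (runHist obs πGR w t ++ runHist obs πstar w k) *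
          condGain obs p f (runHist obs πGR w t ++ runHist obs πstar w k)
            (πstar ((runHist obs πGR w t ++ runHist obs πstar w k).drop t))
        ≤ p w / histMass obs p (runHist obs πGR w t) *
            condGain obs p f (runHist obs πGR w t) (πGR (runHist obs πGR w t)) := by
      intro w
      rcases eq_or_lt_of_le (hp0 w) with hpw | hpw
      · rw [← hpw]
        simp
      · have hMl : 0 < histMass obs p (runHist obs πGR w t ++ runHist obs πstar w k) :=
          lt_of_lt_of_le hpw (le_histMass obs hp0 (hκc w))
        have hMh : 0 < histMass obs p (runHist obs πGR w t) :=
          lt_of_lt_of_le hMl (histMass_append_le obs hp0 _ _)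
        have h1 := hsub (runHist obs πGR w t)
          (runHist obs πGR w t ++ runHist obs πstar w k) ⟨_, rfl⟩
          (πstar ((runHist obs πGR w t ++ runHist obs πstar w k).drop t))
        have h2 := hgreedy w t ht
          (πstar ((runHist obs πGR w t ++ runHist obs πstar w k).drop t))
        have h3 : condGain obs p f (runHist obs πGR w t)
              (πstar ((runHist obs πGR w t ++ runHist obs πstar w k).drop t))
              / histMass obs p (runHist obs πGR w t)
            ≤ condGain obs p f (runHist obs πGR w t) (πGR (runHist obs πGR w t))
              / histMass obs p (runHist obs πGR w t) :=
          (div_le_div_iff_of_pos_right hMh).mpr h2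
        have h4 := h1.trans h3
        calc p w / histMass obs p (runHist obs πGR w t ++ runHist obs πstar w k) *
              condGain obs p f (runHist obs πGR w t ++ runHist obs πstar w k)
                (πstar ((runHist obs πGR w t ++ runHist obs πstar w k).drop t))
            = p w * (condGain obs p f (runHist obs πGR w t ++ runHist obs πstar w k)
                (πstar ((runHist obs πGR w t ++ runHist obs πstar w k).drop t))
                / histMass obs p (runHist obs πGR w t ++ runHist obs πstar w k)) := by
              ring
          _ ≤ p w * (condGain obs p f (runHist obs πGR w t) (πGR (runHist obs πGR w t))
                / histMass obs p (runHist obs πGR w t)) :=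
              mul_le_mul_of_nonneg_left h4 (hp0 w)
          _ = p w / histMass obs p (runHist obs πGR w t) *
                condGain obs p f (runHist obs πGR w t) (πGR (runHist obs πGR w t)) := by
              ring
    have hsum_le : ∑ w, p w / histMass obs p (runHist obs πGR w t ++ runHist obs πstar w k) *
          condGain obs p f (runHist obs πGR w t ++ runHist obs πstar w k)
            (πstar ((runHist obs πGR w t ++ runHist obs πstar w k).drop t))
        ≤ g (t+1) - g t := by
      rw [greedy_inc t]
      exact Finset.sum_le_sum fun w _ => term_bound w
    linarith [e2, hgs, hsum_le]
  -- iterate step_bound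
  have m_bound : ∀ t, t < T → ∀ k,
      ∑ w, p w * f (histNodes (runHist obs πGR w t ++ runHist obs πstar w k)) w
        ≤ g t + k * (g (t+1) - g t) := by
    intro t ht k
    induction k with
    | zero =>
        simp only [Nat.cast_zero, zero_mul, add_zero]
        apply le_of_eq
        apply Finset.sum_congr rfl
        intro w _
        rw [show runHist obs πstar w 0 = [] from rfl, List.append_nil]
    | succ k ih =>
        have := step_bound t ht k
        push_cast
        push_cast at ih
        linarith
  -- key inequality
  have key : ∀ t, t < T → OPT ≤ g t + T * (g (t+1) - g t) := by
    intro t ht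
    have h1 := mono_chain t
    have h2 : ∑ w, p w * f (histNodes (runHist obs πstar w T ++ runHist obs πGR w t)) w
        = ∑ w, p w * f (histNodes (runHist obs πGR w t ++ runHist obs πstar w T)) w := by
      apply Finset.sum_congr rfl
      intro w _
      rw [histNodes_append, histNodes_append, Finset.union_comm]
    have h3 := m_bound t ht T
    rw [h2] at h1
    exact h1.trans h3
  -- arithmetic wrap-up
  have hT' : (0:ℝ) < T := by exact_mod_cast hT
  have hT1 : (1:ℝ) ≤ T := by exact_mod_cast hT
  have hc0 : (0:ℝ) ≤ 1 - 1/(T:ℝ) := by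
    have : 1/(T:ℝ) ≤ 1 := by rw [div_le_one hT']; exact hT1
    linarith
  have ha : ∀ t, t < T → OPT - g (t+1) ≤ (1 - 1/(T:ℝ)) * (OPT - g t) := by
    intro t ht
    have hk := key t ht
    have h4 : (OPT - g t)/(T:ℝ) ≤ g (t+1) - g t := by
      rw [div_le_iff₀ hT']
      nlinarith [hk]
    have h5 : (1 - 1/(T:ℝ)) * (OPT - g t) = (OPT - g t) - (OPT - g t)/(T:ℝ) := by
      ring
    linarith
  have geo : ∀ n, n ≤ T → OPT - g n ≤ (1 - 1/(T:ℝ))^n * (OPT - g 0) := by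
    intro n hn
    induction n with
    | zero => simp
    | succ n ih =>
        have hn' : n < T := lt_of_lt_of_le (Nat.lt_succ_self n) hn
        calc OPT - g (n+1) ≤ (1 - 1/(T:ℝ)) * (OPT - g n) := ha n hn'
          _ ≤ (1 - 1/(T:ℝ)) * ((1 - 1/(T:ℝ))^n * (OPT - g 0)) :=
              mul_le_mul_of_nonneg_left (ih (le_of_lt hn')) hc0
          _ = (1 - 1/(T:ℝ))^(n+1) * (OPT - g 0) := by ring
  have hexp : (1 - 1/(T:ℝ))^T ≤ 1 / Real.exp 1 := by
    have h1 : (1:ℝ) - 1/(T:ℝ) ≤ Real.exp (-(1/(T:ℝ))) := by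
      have := Real.add_one_le_exp (-(1/(T:ℝ)))
      linarith
    have h2 : (1 - 1/(T:ℝ))^T ≤ (Real.exp (-(1/(T:ℝ))))^T := pow_le_pow_left₀ hc0 h1 T
    have h3 : (Real.exp (-(1/(T:ℝ))))^T = Real.exp ((T:ℝ) * (-(1/(T:ℝ)))) :=
      (Real.exp_nat_mul _ T).symm
    have h4 : (T:ℝ) * (-(1/(T:ℝ))) = -1 := by
      field_simp
    rw [h3, h4] at h2
    rw [Real.exp_neg] at h2
    calc (1 - 1/(T:ℝ))^T ≤ (Real.exp 1)⁻¹ := h2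
      _ = 1 / Real.exp 1 := (one_div _).symm
  have hg0 : 0 ≤ g 0 := Finset.sum_nonneg fun w _ => mul_nonneg (hp0 w) (hf0 _ w)
  have hOPT0 : 0 ≤ OPT := Finset.sum_nonneg fun w _ => mul_nonneg (hp0 w) (hf0 _ w)
  have hinv : 0 ≤ 1 / Real.exp 1 := by positivity
  have final : OPT - g T ≤ (1 / Real.exp 1) * OPT := by
    have h5 := geo T le_rfl
    rcases le_or_gt 0 (OPT - g 0) with hx | hx
    · calc OPT - g T ≤ (1 - 1/(T:ℝ))^T * (OPT - g 0) := h5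
        _ ≤ (1 / Real.exp 1) * (OPT - g 0) := mul_le_mul_of_nonneg_right hexp hx
        _ ≤ (1 / Real.exp 1) * OPT := mul_le_mul_of_nonneg_left (by linarith) hinv
    · have h6 : (1 - 1/(T:ℝ))^T * (OPT - g 0) ≤ 0 :=
        mul_nonpos_of_nonneg_of_nonpos (pow_nonneg hc0 T) hx.le
      have h7 : 0 ≤ (1 / Real.exp 1) * OPT := mul_nonneg hinv hOPT0
      linarith
  have hring : (1 - 1 / Real.exp 1) * OPT = OPT - (1 / Real.exp 1) * OPT := by ring
  linarith


end AdaptiveSubmodular
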